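/- arXiv:2403.15828 — 2 statements merged into one kernel-verified Lean document; each statement's English description precedes it below -/
import Mathlib

section
/- For w∈(0,1), τ>0, a≥0, μ>0, p>0, G>0 with 1+τ−a > 0, the unique positive critical point of U(f) = w·log(1+τ−a−μ/f)/log(1+τ) − (1−w)·p·f/G over f>0 with 1+τ−a−μ/f>0 is f* = 2wG/(ϑ − log(1+τ)·p·(1−w)), where ϑ = sqrt(p·log(1+τ)·(1−w)/μ)·sqrt(p·μ·log(1+τ)·(1−w) + 4Gw(1+τ−a)). -/
private lemma stmt1_aux1 (μ T D w G c fs : ℝ) (hTD : D < T)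
    (hcμT : μ * T < μ * D + 2 * w * G * c)
    (h5 : c * fs * (T - D) = 2 * w * G * c) : μ < c * fs := by
  nlinarith [h5, hcμT, hTD]

set_option maxHeartbeats 2000000 in
/-- The unique positive critical point of
U(f) = w·log(1+τ−a−μ/f)/log(1+τ) − (1−w)·p·f/G over the feasible domain is
f* = 2wG/(ϑ − log(1+τ)·p·(1−w)). -/
theorem stmt1 (w τ a μ p G : ℝ)
    (hw : w ∈ Set.Ioo (0:ℝ) 1) (hτ : 0 < τ) (ha : 0 ≤ a) (hμ : 0 < μ)
    (hp : 0 < p) (hG : 0 < G) (hfeas : 0 < 1 + τ - a) :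
    ∀ f : ℝ, 0 < f → 0 < 1 + τ - a - μ / f →
      (deriv (fun f : ℝ => w * Real.log (1 + τ - a - μ / f) / Real.log (1 + τ)
          - (1 - w) * p * f / G) f = 0 ↔
        f = 2 * w * G /
          (Real.sqrt (p * Real.log (1 + τ) * (1 - w) / μ) *
            Real.sqrt (p * μ * Real.log (1 + τ) * (1 - w) + 4 * G * w * (1 + τ - a))
          - Real.log (1 + τ) * p * (1 - w))) := by
  obtain ⟨hw0, hw1⟩ := hw
  intro f hf hE
  have hw1' : 0 < 1 - w := by linarith
  set L := Real.log (1 + τ) with hLdef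
  have hL : 0 < L := Real.log_pos (by linarith)
  have hf0 : f ≠ 0 := ne_of_gt hf
  have hE' : 1 + τ - a - μ / f ≠ 0 := ne_of_gt hE
  -- derivative computation
  have hderiv : deriv (fun x : ℝ => w * Real.log (1 + τ - a - μ / x) / L - (1-w)*p*x/G) f
      = w * (μ / f ^ 2 / (1 + τ - a - μ / f)) / L - (1-w)*p/G := by
    have h1 : HasDerivAt (fun x : ℝ => 1 + τ - a - μ / x) (μ / f ^ 2) f := by
      have h0 : HasDerivAt (fun x : ℝ => μ / x) (-(μ / f ^ 2)) f := by
        simpa [div_eq_mul_inv, neg_mul, mul_comm] using (hasDerivAt_inv hf0).const_mul μ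
      have h0' := (hasDerivAt_const f (1+τ-a)).sub h0
      rw [sub_neg_eq_add, zero_add] at h0'
      exact h0'
    have h3 := (((h1.log hE').const_mul w).div_const L).sub
      (((hasDerivAt_id f).const_mul ((1-w)*p)).div_const G)
    refine HasDerivAt.deriv ?_
    rw [show (1-w)*p*1/G = (1-w)*p/G by ring] at h3
    exact h3
  rw [hderiv]
  set c := 1 + τ - a with hcdef
  set D := L * p * (1 - w) with hDdef
  set T := Real.sqrt (p * L * (1 - w) / μ) * Real.sqrt (p * μ * L * (1 - w) + 4 * G * w * c)
    with hTdef
  set fs := 2 * w * G / (T - D) with hfsdef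
  have hc : 0 < c := hfeas
  have hD : 0 < D := by rw [hDdef]; positivity
  have hTnn : 0 ≤ T := by rw [hTdef]; positivity
  have hT2 : T ^ 2 = D ^ 2 + 4 * G * w * c * D / μ := by
    rw [hTdef, mul_pow, Real.sq_sqrt (by positivity), Real.sq_sqrt (by positivity), hDdef]
    field_simp
  clear_value L c D T fs
  have hq : 0 < 4 * G * w * c * D / μ := by positivity
  have hTD : D < T := by nlinarith [hT2, hq, hTnn, hD]
  have hTD' : T - D ≠ 0 := by linarith
  have hfsT : fs * (T - D) = 2 * w * G := by
    rw [hfsdef]; field_simp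
  have hfs : 0 < fs := by
    rw [hfsdef]; apply div_pos (by positivity); linarith
  have hK : μ * (4 * G * w * c * D / μ) = 4 * G * w * c * D := by
    rw [mul_comm, div_mul_cancel₀ _ (ne_of_gt hμ)]
  have hT2' : μ * T ^ 2 = μ * D ^ 2 + 4 * G * w * c * D := by
    rw [hT2, mul_add, hK]
  -- fs satisfies the quadratic
  have hstar : D * (c * fs ^ 2 - μ * fs) = w * μ * G := by
    have h6 : 4 * w * G * (D * (c * fs ^ 2 - μ * fs)) = 4 * w * G * (w * μ * G) := by
      linear_combination (-fs^2) * hT2' + μ * (fs*T + fs*D + 2*w*G) * hfsT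
    exact mul_left_cancel₀ (by positivity) h6
  -- cf - μ > 0
  have hcf : 0 < c * f - μ := by
    have h2 : (c - μ / f) * f = c * f - μ := by field_simp
    nlinarith [mul_pos hE hf]
  -- equivalence of deriv = 0 with quadratic
  have key : (w * (μ / f ^ 2 / (c - μ / f)) / L - (1-w)*p/G = 0)
      ↔ D * (c * f ^ 2 - μ * f) = w * μ * G := by
    rw [sub_eq_zero, div_eq_div_iff (ne_of_gt hL) (ne_of_gt hG)]
    rw [hDdef]
    field_simp [ne_of_gt hcf]
    constructor
    · intro h
      have hne : f * c - μ ≠ 0 := by nlinarith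
      rw [div_eq_iff hne] at h
      linear_combination -h
    · intro h
      have hne : f * c - μ ≠ 0 := by nlinarith
      rw [div_eq_iff hne]
      linear_combination -h
  rw [key]
  clear hderiv hTdef hT2 hK hLdef key hq hE hE'
  -- μ < c * fs
  have hT2'' : (μ * T) ^ 2 = (μ * D) ^ 2 + 4 * G * w * c * D * μ := by
    linear_combination μ * hT2'
  have hcμT : μ * T < μ * D + 2 * w * G * c := by
    nlinarith [hT2'', mul_pos (mul_pos hw0 hG) hc, mul_nonneg (le_of_lt hμ) hTnn,
      mul_pos hμ hD]
  have h5 : c * fs * (T - D) = 2 * w * G * c := by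
    rw [hfsdef]; field_simp
  have hcfs : μ < c * fs := stmt1_aux1 μ T D w G c fs hTD hcμT h5
  constructor
  · intro h
    have hfac : (f - fs) * (D * c * (f + fs) - D * μ) = 0 := by
      linear_combination h - hstar
    have hpos : 0 < D * c * (f + fs) - D * μ := by
      have a1 := mul_pos hD (sub_pos.mpr hcfs)
      have a2 := mul_pos (mul_pos hD hc) hf
      linarith [a1, a2]
    rcases mul_eq_zero.mp hfac with h1 | h2
    · linarith [sub_eq_zero.mp h1]
    · linarith
  · intro h
    rw [h]; exact hstar
end

section
/- For positive constants a₁, a₂, a₃ and H>0, the function f(x) = a₁·log₂(1 + a₂/(H²+x)^{a₃/2}) is convex in x on x ≥ 0. -/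
open Real Set Filter

/-- For positive constants a₁, a₂, a₃ and H > 0, the function
f(x) = a₁·log₂(1 + a₂/(H²+x)^(a₃/2)) is convex in x on x ≥ 0. -/
theorem stmt8 (a1 a2 a3 H : ℝ)
    (ha1 : 0 < a1) (ha2 : 0 < a2) (ha3 : 0 < a3) (hH : 0 < H) :
    ConvexOn ℝ (Set.Ici (0:ℝ))
      (fun x => a1 * Real.logb 2 (1 + a2 / (H ^ 2 + x) ^ (a3 / 2))) := by
  set p : ℝ := a3 / 2 with hpdef
  have hp : 0 < p := by positivity
  -- auxiliary function
  set G : ℝ → ℝ := fun x => Real.log ((H ^ 2 + x) ^ p + a2) - p * Real.log (H ^ 2 + x)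
    with hGdef
  set G' : ℝ → ℝ := fun x =>
      p * (H ^ 2 + x) ^ (p - 1) / ((H ^ 2 + x) ^ p + a2) - p / (H ^ 2 + x) with hG'def
  set G'' : ℝ → ℝ := fun x =>
      (p * (p - 1) * (H ^ 2 + x) ^ (p - 2) * ((H ^ 2 + x) ^ p + a2)
        - p ^ 2 * ((H ^ 2 + x) ^ (p - 1)) ^ 2) / ((H ^ 2 + x) ^ p + a2) ^ 2
        + p / (H ^ 2 + x) ^ 2 with hG''def
  have hderiv1 : ∀ x : ℝ, 0 < H ^ 2 + x → HasDerivAt G (G' x) x := by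
    intro x ht
    have h0 : HasDerivAt (fun x : ℝ => H ^ 2 + x) 1 x := by
      simpa using (hasDerivAt_id x).const_add (H ^ 2)
    have h1 : HasDerivAt (fun x : ℝ => (H ^ 2 + x) ^ p)
        (p * (H ^ 2 + x) ^ (p - 1) * 1) x :=
      (Real.hasDerivAt_rpow_const (p := p) (Or.inl ht.ne')).comp x h0
    have hpos : (0:ℝ) < (H ^ 2 + x) ^ p + a2 := by positivity
    have h2 := (h1.add_const a2).log hpos.ne'
    have h4 := (h0.log ht.ne').const_mul p
    have h5 := h2.sub h4
    convert h5 using 1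
    case e'_4 | e'_5 | e'_8 => rfl
    simp [hG'def]
    ring
  have hderiv2 : ∀ x : ℝ, 0 < H ^ 2 + x → HasDerivAt G' (G'' x) x := by
    intro x ht
    have h0 : HasDerivAt (fun x : ℝ => H ^ 2 + x) 1 x := by
      simpa using (hasDerivAt_id x).const_add (H ^ 2)
    have h1 : HasDerivAt (fun x : ℝ => (H ^ 2 + x) ^ p)
        (p * (H ^ 2 + x) ^ (p - 1) * 1) x :=
      (Real.hasDerivAt_rpow_const (p := p) (Or.inl ht.ne')).comp x h0
    have hnum : HasDerivAt (fun x : ℝ => p * (H ^ 2 + x) ^ (p - 1))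
        (p * ((p - 1) * (H ^ 2 + x) ^ (p - 1 - 1) * 1)) x :=
      (((Real.hasDerivAt_rpow_const (p := p - 1) (Or.inl ht.ne')).comp x h0).const_mul p)
    have hpos : (0:ℝ) < (H ^ 2 + x) ^ p + a2 := by positivity
    have hq := hnum.div (h1.add_const a2) hpos.ne'
    have hr := (hasDerivAt_const x p).div h0 ht.ne'
    have h5 := hq.sub hr
    convert h5 using 1
    case e'_4 | e'_5 | e'_8 => rfl
    have e1 : (H ^ 2 + x) ^ (p - 1 - 1) = (H ^ 2 + x) ^ (p - 2) := by ring_nf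
    simp [hG''def, e1]
    ring
  have hG''nonneg : ∀ x : ℝ, 0 < H ^ 2 + x → 0 ≤ G'' x := by
    intro x ht
    have hA : (0:ℝ) < (H ^ 2 + x) ^ p := rpow_pos_of_pos ht p
    have e1 : (H ^ 2 + x) ^ (p - 1) = (H ^ 2 + x) ^ p / (H ^ 2 + x) := by
      rw [Real.rpow_sub ht, Real.rpow_one]
    have e2 : (H ^ 2 + x) ^ (p - 2) = (H ^ 2 + x) ^ p / (H ^ 2 + x) ^ 2 := by
      rw [Real.rpow_sub ht, Real.rpow_two]
    rw [hG''def]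
    dsimp only
    rw [e1, e2]
    set A := (H ^ 2 + x) ^ p
    set t := H ^ 2 + x
    have hAa : (0:ℝ) < A + a2 := by positivity
    rw [div_add_div _ _ (by positivity) (by positivity), le_div_iff₀ (by positivity)]
    have key : (p * (p - 1) * (A / t ^ 2) * (A + a2) - p ^ 2 * (A / t) ^ 2) * t ^ 2
        + p * (A + a2) ^ 2 = p * ((p + 1) * a2 * A + a2 ^ 2) := by
      field_simp
      ring
    nlinarith [mul_pos hp (mul_pos (mul_pos (by linarith : (0:ℝ) < p + 1) ha2) hA), sq_nonneg a2]
  have hGconv : ConvexOn ℝ (Set.Ici (0:ℝ)) G := by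
    have hint : interior (Set.Ici (0:ℝ)) = Set.Ioi 0 := interior_Ici
    apply convexOn_of_hasDerivWithinAt2_nonneg (f' := G') (f'' := G'') (convex_Ici 0)
    · intro x hx
      have ht : 0 < H ^ 2 + x := by
        have : (0:ℝ) ≤ x := hx; positivity
      exact (hderiv1 x ht).continuousAt.continuousWithinAt
    · intro x hx
      rw [hint] at hx
      have ht : 0 < H ^ 2 + x := by have : (0:ℝ) < x := hx; positivity
      exact (hderiv1 x ht).hasDerivWithinAt
    · intro x hx
      rw [hint] at hx
      have ht : 0 < H ^ 2 + x := by have : (0:ℝ) < x := hx; positivity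
      exact (hderiv2 x ht).hasDerivWithinAt
    · intro x hx
      rw [hint] at hx
      have ht : 0 < H ^ 2 + x := by have : (0:ℝ) < x := hx; positivity
      exact hG''nonneg x ht
  have hc : (0:ℝ) ≤ a1 / Real.log 2 := le_of_lt (div_pos ha1 (Real.log_pos one_lt_two))
  have hsmul := hGconv.smul hc
  refine hsmul.congr ?_
  intro x hx
  have hx0 : (0:ℝ) ≤ x := hx
  have ht : 0 < H ^ 2 + x := by positivity
  have hA : (0:ℝ) < (H ^ 2 + x) ^ p := rpow_pos_of_pos ht p
  simp only [Pi.smul_apply, smul_eq_mul, hGdef]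
  have e : 1 + a2 / (H ^ 2 + x) ^ (a3 / 2) = ((H ^ 2 + x) ^ p + a2) / (H ^ 2 + x) ^ p := by
    rw [← hpdef]; field_simp
  rw [e, Real.logb, Real.log_div (by positivity) hA.ne', Real.log_rpow ht]
  ring
end
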